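/- For all α ∈ (0, 1/2], setting a₁ = −2 + (8/(3-α))·sin²(π/(3-α)) and b₁ = 1 − (4(1-α)/(3-α))·sin²(π/(3-α)), the inequality a₁(1 + b₁) > 4b₁ holds; equivalently a₁(1+b₁)/(4b₁) > 1 (with b₁ > 0). -/

import Mathlib

open Real

lemma keyPolyStmt7 (α : ℝ) (h0 : 0 < α) (h1 : α ≤ 1/2) :
    (3/4 + 0.866*(3.1415*(α/9+α^2/27+α^3/81)) - 0.6496*(0.419*α)^3 - (0.419*α)^2/2) *
      (3*(3-α)^2 - 4*(3-α) - 4*(1-α)*(3/4 + 0.866*(3.1415*(α/9+α^2/27+α^3/81)) - 0.6496*(0.419*α)^3 - (0.419*α)^2/2))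
    > (3-α)^2 := by
  nlinarith [sq_nonneg α, mul_pos h0 h0, sq_nonneg (α-1/2), mul_pos (mul_pos h0 h0) h0, sq_nonneg (α*(α-1/2)), mul_nonneg (mul_nonneg h0.le h0.le) (sub_nonneg.2 h1)]

lemma key2AuxStmt7 (α s q : ℝ) (h0 : 0 < α) (h1 : α ≤ 1/2) (hq : q ≤ s) (hs1 : s ≤ 1) (hq0 : 0 ≤ q)
    (hP : q*(3*(3-α)^2 - 4*(3-α) - 4*(1-α)*q) > (3-α)^2) :
    s*(3*(3-α)^2 - 4*(3-α) - 4*(1-α)*s) > (3-α)^2 := by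
  have hfac0 : (0:ℝ) ≤ 3*(3-α)^2 - 4*(3-α) - 4*(1-α)*(s+q) := by
    nlinarith [hq.trans hs1]
  nlinarith [mul_nonneg (sub_nonneg.2 hq) hfac0]

lemma key1AuxStmt7 (α s R x : ℝ) (h0 : 0 < α) (h1 : α ≤ 1/2) (hsU : s ≤ 3/4 + (R/2)*x)
    (hRx : R*x ≤ 0.7258*α) (hRx0 : 0 ≤ R*x) : 4*(1-α)*s < 3-α := by
  nlinarith [mul_nonneg (by linarith : (0:ℝ) ≤ 1-α) (sub_nonneg.2 hsU), mul_nonneg h0.le hRx0]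

set_option maxHeartbeats 2000000 in
theorem stmt_7 (α : ℝ) (h0 : 0 < α) (h1 : α ≤ 1/2) :
    0 < 1 - (4*(1-α)/(3-α)) * (sin (π/(3-α)))^2 ∧
    (-2 + (8/(3-α)) * (sin (π/(3-α)))^2) *
        (1 + (1 - (4*(1-α)/(3-α)) * (sin (π/(3-α)))^2))
      > 4 * (1 - (4*(1-α)/(3-α)) * (sin (π/(3-α)))^2) := by
  have ht0 : (0:ℝ) < 3 - α := by linarith
  have ht0' : (3:ℝ) - α ≠ 0 := ne_of_gt ht0
  have hπl := Real.pi_gt_d6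
  have hπu := Real.pi_lt_d6
  set x : ℝ := π * α / (3 * (3 - α)) with hxdef
  have hxpos : 0 < x := div_pos (by nlinarith) (by linarith)
  have h3tx : 3 * (3 - α) * x = π * α := by rw [hxdef]; field_simp
  have hxhi : x ≤ 0.419 * α := by nlinarith [h3tx]
  have hxlo : 3.1415*(α/9+α^2/27+α^3/81) ≤ x := by
    nlinarith [h3tx, mul_pos (mul_pos h0 h0) (mul_pos h0 h0)]
  have hx021 : x ≤ 0.21 := by nlinarith
  have hsplit : π/(3-α) = π/3 + x := by rw [hxdef]; field_simp; ring
  have hu1 : sin x < x := Real.sin_lt hxpos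
  have hu2 : x - x^3/4 < sin x := by
    have := Real.sin_gt_sub_cube hxpos; nlinarith [pow_pos hxpos 3]
  have hu0 : 0 ≤ sin x := Real.sin_nonneg_of_nonneg_of_le_pi hxpos.le (by linarith)
  have hc1 : cos x ≤ 1 := Real.cos_le_one x
  have hc2 : 1 - x^2/2 ≤ cos x := Real.one_sub_sq_div_two_le_cos
  have hc0 : (0:ℝ) < cos x := by
    apply Real.cos_pos_of_mem_Ioo; constructor <;> nlinarith
  have pyth := Real.sin_sq_add_cos_sq x
  have h3sq : Real.sqrt 3 ^ 2 = 3 := Real.sq_sqrt (by norm_num)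
  have h3nn : (0:ℝ) ≤ Real.sqrt 3 := Real.sqrt_nonneg 3
  have r3l : (1.732:ℝ) ≤ Real.sqrt 3 := by nlinarith
  have r3u : Real.sqrt 3 ≤ 1.7321 := by nlinarith
  have hS : (sin (π/(3-α)))^2 = (3 - 2*(sin x)^2 + 2*Real.sqrt 3*(sin x * cos x))/4 := by
    rw [hsplit, Real.sin_add, Real.sin_pi_div_three, Real.cos_pi_div_three]
    linear_combination (3/4) * pyth + (cos x ^ 2 / 4) * h3sq
  set s := (sin (π/(3-α)))^2 with hsdef
  have hs1 : s ≤ 1 := Real.sin_sq_le_one (π/(3-α))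
  have e1 : (sin x)^2 ≤ x^2 := by nlinarith
  have e2 : x - (3/4)*x^3 ≤ sin x * cos x := by
    nlinarith [mul_nonneg (sub_nonneg.2 hu2.le) hc0.le,
      mul_nonneg (by nlinarith : (0:ℝ) ≤ x - x^3/4) (sub_nonneg.2 hc2),
      mul_pos (mul_pos (mul_pos hxpos hxpos) (mul_pos hxpos hxpos)) hxpos]
  have e3 : sin x * cos x ≤ x := by
    nlinarith [mul_nonneg (sub_nonneg.2 hu1.le) hc0.le, mul_nonneg hu0 (sub_nonneg.2 hc1)]
  have hsL : 3/4 + (Real.sqrt 3/2)*x - (3*Real.sqrt 3/8)*x^3 - x^2/2 ≤ s := by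
    rw [hS]
    nlinarith [mul_nonneg h3nn (sub_nonneg.2 e2), e1]
  have hsU : s ≤ 3/4 + (Real.sqrt 3/2)*x := by
    rw [hS]
    nlinarith [mul_nonneg h3nn (sub_nonneg.2 e3), sq_nonneg (sin x)]
  have hx3 : x^3 ≤ (0.419*α)^3 := pow_le_pow_left₀ hxpos.le hxhi 3
  have hx2 : x^2 ≤ (0.419*α)^2 := pow_le_pow_left₀ hxpos.le hxhi 2
  have term1 : 0.866*(3.1415*(α/9+α^2/27+α^3/81)) ≤ (Real.sqrt 3/2)*x := by
    have hxlo0 : (0:ℝ) ≤ 3.1415*(α/9+α^2/27+α^3/81) := by positivity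
    nlinarith [mul_le_mul (by linarith : (0.866:ℝ) ≤ Real.sqrt 3/2) hxlo hxlo0 (by linarith)]
  have term2 : (3*Real.sqrt 3/8)*x^3 ≤ 0.6496*(0.419*α)^3 := by
    have hx30 : (0:ℝ) ≤ x^3 := by positivity
    nlinarith [mul_le_mul (by linarith : 3*Real.sqrt 3/8 ≤ (0.6496:ℝ)) hx3 hx30 (by norm_num)]
  have hsA : 3/4 + 0.866*(3.1415*(α/9+α^2/27+α^3/81)) - 0.6496*(0.419*α)^3 - (0.419*α)^2/2 ≤ s := by
    linarith [hsL, term1, term2, hx2]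
  have hsA1 : 3/4 + 0.866*(3.1415*(α/9+α^2/27+α^3/81)) - 0.6496*(0.419*α)^3 - (0.419*α)^2/2 ≤ 1 := le_trans hsA hs1
  have hP := keyPolyStmt7 α h0 h1
  have hsA0 : (0:ℝ) ≤ 3/4 + 0.866*(3.1415*(α/9+α^2/27+α^3/81)) - 0.6496*(0.419*α)^3 - (0.419*α)^2/2 := by
    nlinarith [mul_pos (mul_pos h0 h0) h0, mul_pos h0 h0]
  have key2 : s*(3*(3-α)^2 - 4*(3-α) - 4*(1-α)*s) > (3-α)^2 :=
    key2AuxStmt7 α s _ h0 h1 hsA hs1 hsA0 hP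
  have hRx : Real.sqrt 3 * x ≤ 0.7258*α := by
    have h := mul_le_mul r3u hxhi hxpos.le (by norm_num : (0:ℝ) ≤ 1.7321)
    linarith
  have key1 : 4*(1-α)*s < 3-α :=
    key1AuxStmt7 α s (Real.sqrt 3) x h0 h1 hsU hRx (mul_nonneg h3nn hxpos.le)
  constructor
  · have e : 1 - (4*(1-α)/(3-α)) * s = ((3-α) - 4*(1-α)*s)/(3-α) := by field_simp
    rw [e]; exact div_pos (by linarith) ht0
  · rw [gt_iff_lt, ← sub_pos]
    have e : (-2 + (8/(3-α))*s) * (1 + (1 - (4*(1-α)/(3-α))*s)) - 4*(1 - (4*(1-α)/(3-α))*s)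
        = 8*(s*(3*(3-α)^2 - 4*(3-α) - 4*(1-α)*s) - (3-α)^2)/(3-α)^2 := by
      field_simp; ring
    rw [e]
    exact div_pos (by linarith) (by positivity)
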